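/- Let λ, k, m, μ be positive integers with μ = k − λ and m ≥ 20μ, and let d be a nonnegative integer satisfying (d − μ)(μ + λm) − λd² ≤ 0. Then either d ≤ 1.1μ or d ≥ m − 1.1μ. -/
import Mathlib


/-- Degree separation: if μ = k − λ, m ≥ 20μ and d satisfies the McCarthy–Vanstone
inequality, then d ≤ 1.1μ or d ≥ m − 1.1μ. -/
theorem degree_separation (lam k m mu : ℕ) (hlam : 0 < lam) (hk : 0 < k) (hm : 0 < m)
    (hlt : lam < k) (hmu : mu = k - lam) (hm20 : 20 * mu ≤ m) (d : ℕ)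
    (hq : ((d : ℝ) - mu) * ((mu : ℝ) + lam * m) - (lam : ℝ) * (d : ℝ) ^ 2 ≤ 0) :
    (d : ℝ) ≤ 1.1 * mu ∨ (m : ℝ) - 1.1 * mu ≤ (d : ℝ) := by
  by_contra h
  push_neg at h
  obtain ⟨h1, h2⟩ := h
  have hmu1 : (1 : ℝ) ≤ (mu : ℝ) := by
    have : 1 ≤ mu := by omega
    exact_mod_cast this
  have hlam1 : (1 : ℝ) ≤ (lam : ℝ) := by exact_mod_cast hlam
  have hm20' : (20 : ℝ) * (mu : ℝ) ≤ (m : ℝ) := by exact_mod_cast hm20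
  have key : ((d : ℝ) - mu) * ((mu : ℝ) + lam * m) - (lam : ℝ) * (d : ℝ) ^ 2 =
      (lam : ℝ) * (((d : ℝ) - 1.1 * mu) * ((m : ℝ) - 1.1 * mu - d)) +
      (mu : ℝ) * ((d : ℝ) - mu + (lam : ℝ) * (0.1 * m - 1.21 * mu)) := by
    ring
  have t1 : (0 : ℝ) < (lam : ℝ) * (((d : ℝ) - 1.1 * mu) * ((m : ℝ) - 1.1 * mu - d)) := by
    apply mul_pos (by linarith)
    exact mul_pos (by linarith) (by linarith)
  have t2a : (0 : ℝ) < 0.1 * (m : ℝ) - 1.21 * mu := by linarith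
  have t2b : (1 : ℝ) * (0.1 * (m : ℝ) - 1.21 * mu) ≤ (lam : ℝ) * (0.1 * m - 1.21 * mu) :=
    mul_le_mul_of_nonneg_right hlam1 (le_of_lt t2a)
  have t2 : (0 : ℝ) < (mu : ℝ) * ((d : ℝ) - mu + (lam : ℝ) * (0.1 * m - 1.21 * mu)) := by
    apply mul_pos (by linarith)
    nlinarith
  linarith [key, t1, t2, hq]
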